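/- arXiv:1903.11763 — 2 statements merged into one kernel-verified Lean document; each statement's English description precedes it below -/
import Mathlib

section
/- Define value functions by backward recursion: V_{N+1}(P, Pₑ) = 0 and V_k(P, Pₑ) = min over a ∈ {0,1} of [c(P, Pₑ, a) + P₀₀(a)·V_{k+1}(h(P), h(Pₑ)) + P₀₁(a)·V_{k+1}(h(P), P*) + P₁₀(a)·V_{k+1}(P*, h(Pₑ)) + P₁₁(a)·V_{k+1}(P*, P*)]. Then for every k ∈ {1,…,N+1}, V_k(P, Pₑ) is increasing in P: if P ≤ P′ in the Loewner order then V_k(P, Pₑ) ≤ V_k(P′, Pₑ). -/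
open Matrix

private lemma psd_trace_nonneg {m : ℕ} {M : Matrix (Fin m) (Fin m) ℝ}
    (hM : M.PosSemidef) : 0 ≤ M.trace := by
  rw [Matrix.trace]
  apply Finset.sum_nonneg
  intro i _
  exact hM.diag_nonneg

set_option maxHeartbeats 1000000 in
/-- The backward-recursion value function is increasing in `P` (Loewner order). -/
theorem value_function_increasing_in_P {n N : ℕ}
    (A Q Pstar : Matrix (Fin n) (Fin n) ℝ) (hQ : Q.PosSemidef) (hPstar : Pstar.PosSemidef)
    (h : Matrix (Fin n) (Fin n) ℝ → Matrix (Fin n) (Fin n) ℝ)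
    (hdef : ∀ X, h X = A * X * Aᵀ + Q)
    (lam lamE e1 e2 : ℝ)
    (hlam : 0 ≤ lam ∧ lam ≤ 1) (hlamE : 0 ≤ lamE ∧ lamE ≤ 1)
    (he1 : 0 ≤ e1 ∧ e1 ≤ 1) (he2 : 0 ≤ e2 ∧ e2 ≤ 1)
    (β C : ℝ) (hβ : 0 < β ∧ β < 1) (hC : 0 ≤ C)
    (P00 P01 P10 P11 : ℝ → ℝ)
    (h00 : P00 0 = (1 - lam) * (1 - lamE) ∧ P00 1 = (1 - e1 * lam) * (1 - e2 * lamE))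
    (h01 : P01 0 = (1 - lam) * lamE ∧ P01 1 = (1 - e1 * lam) * (e2 * lamE))
    (h10 : P10 0 = lam * (1 - lamE) ∧ P10 1 = e1 * lam * (1 - e2 * lamE))
    (h11 : P11 0 = lam * lamE ∧ P11 1 = e1 * lam * (e2 * lamE))
    (c : Matrix (Fin n) (Fin n) ℝ → Matrix (Fin n) (Fin n) ℝ → ℝ → ℝ)
    (hc : ∀ P Pe (a : ℝ), c P Pe a =
      a * C
      + β * ((a * e1 * lam + (1 - a) * lam) * Pstar.trace
          + (1 - a * e1 * lam - (1 - a) * lam) * (h P).trace)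
      - (1 - β) * ((a * e2 * lamE + (1 - a) * lamE) * Pstar.trace
          + (1 - a * e2 * lamE - (1 - a) * lamE) * (h Pe).trace))
    (V : ℕ → Matrix (Fin n) (Fin n) ℝ → Matrix (Fin n) (Fin n) ℝ → ℝ)
    (hVend : ∀ P Pe, V (N + 1) P Pe = 0)
    (hVrec : ∀ k, 1 ≤ k → k ≤ N → ∀ P Pe, V k P Pe =
      min (c P Pe 0 + P00 0 * V (k + 1) (h P) (h Pe) + P01 0 * V (k + 1) (h P) Pstar
            + P10 0 * V (k + 1) Pstar (h Pe) + P11 0 * V (k + 1) Pstar Pstar)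
          (c P Pe 1 + P00 1 * V (k + 1) (h P) (h Pe) + P01 1 * V (k + 1) (h P) Pstar
            + P10 1 * V (k + 1) Pstar (h Pe) + P11 1 * V (k + 1) Pstar Pstar)) :
    ∀ k, 1 ≤ k → k ≤ N + 1 →
      ∀ P P' Pe : Matrix (Fin n) (Fin n) ℝ, P.PosSemidef → P'.PosSemidef → Pe.PosSemidef →
        (P' - P).PosSemidef → V k P Pe ≤ V k P' Pe := by
  obtain ⟨hlam0, hlam1⟩ := hlam
  obtain ⟨hlamE0, hlamE1⟩ := hlamE
  obtain ⟨he10, he11⟩ := he1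
  obtain ⟨he20, he21⟩ := he2
  obtain ⟨hβ0, hβ1⟩ := hβ
  have he1l : e1 * lam ≤ 1 := by nlinarith
  have he1l0 : 0 ≤ e1 * lam := mul_nonneg he10 hlam0
  have he2l : e2 * lamE ≤ 1 := by nlinarith
  have he2l0 : 0 ≤ e2 * lamE := mul_nonneg he20 hlamE0
  have hhPSD : ∀ X : Matrix (Fin n) (Fin n) ℝ, X.PosSemidef → (h X).PosSemidef := by
    intro X hX
    rw [hdef]
    have : (A * X * Aᴴ).PosSemidef := hX.mul_mul_conjTranspose_same A
    simpa [Matrix.conjTranspose_eq_transpose_of_trivial] using this.add hQ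
  have hdiff : ∀ P P' : Matrix (Fin n) (Fin n) ℝ, (P' - P).PosSemidef →
      (h P' - h P).PosSemidef := by
    intro P P' hPP'
    have heq : h P' - h P = A * (P' - P) * Aᵀ := by
      rw [hdef, hdef, Matrix.mul_sub, Matrix.sub_mul]
      abel
    rw [heq]
    have : (A * (P' - P) * Aᴴ).PosSemidef := hPP'.mul_mul_conjTranspose_same A
    simpa [Matrix.conjTranspose_eq_transpose_of_trivial] using this
  have htr : ∀ P P' : Matrix (Fin n) (Fin n) ℝ, (P' - P).PosSemidef →
      (h P).trace ≤ (h P').trace := by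
    intro P P' hPP'
    have := psd_trace_nonneg (hdiff P P' hPP')
    rw [Matrix.trace_sub] at this
    linarith
  have key : ∀ d k, 1 ≤ k → k ≤ N + 1 → N + 1 - k = d →
      ∀ P P' Pe : Matrix (Fin n) (Fin n) ℝ, P.PosSemidef → P'.PosSemidef → Pe.PosSemidef →
        (P' - P).PosSemidef → V k P Pe ≤ V k P' Pe := by
    intro d
    induction d with
    | zero =>
      intro k hk1 hk2 hk0 P P' Pe _ _ _ _
      have : k = N + 1 := by omega
      subst this
      rw [hVend, hVend]
    | succ d ih =>
      intro k hk1 hk2 hkd P P' Pe hP hP' hPe hPP'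
      have hkN : k ≤ N := by omega
      rw [hVrec k hk1 hkN, hVrec k hk1 hkN]
      have ih1 := ih (k + 1) (by omega) (by omega) (by omega)
      have t1 : V (k + 1) (h P) (h Pe) ≤ V (k + 1) (h P') (h Pe) :=
        ih1 _ _ _ (hhPSD P hP) (hhPSD P' hP') (hhPSD Pe hPe) (hdiff P P' hPP')
      have t2 : V (k + 1) (h P) Pstar ≤ V (k + 1) (h P') Pstar :=
        ih1 _ _ _ (hhPSD P hP) (hhPSD P' hP') hPstar (hdiff P P' hPP')
      have htrP := htr P P' hPP'
      apply min_le_min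
      · have hc0 : c P Pe 0 ≤ c P' Pe 0 := by
          rw [hc, hc]
          have hfac : (0:ℝ) ≤ β * (1 - lam) := mul_nonneg hβ0.le (by linarith)
          nlinarith [mul_le_mul_of_nonneg_left htrP hfac]
        have hn00 : (0:ℝ) ≤ P00 0 := by rw [h00.1]; exact mul_nonneg (by linarith) (by linarith)
        have hn01 : (0:ℝ) ≤ P01 0 := by rw [h01.1]; exact mul_nonneg (by linarith) hlamE0
        have m1 := mul_le_mul_of_nonneg_left t1 hn00
        have m2 := mul_le_mul_of_nonneg_left t2 hn01
        linarith
      · have hc1 : c P Pe 1 ≤ c P' Pe 1 := by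
          rw [hc, hc]
          have hfac : (0:ℝ) ≤ β * (1 - e1 * lam) := mul_nonneg hβ0.le (by linarith)
          nlinarith [mul_le_mul_of_nonneg_left htrP hfac]
        have hn00 : (0:ℝ) ≤ P00 1 := by rw [h00.2]; exact mul_nonneg (by linarith) (by linarith)
        have hn01 : (0:ℝ) ≤ P01 1 := by rw [h01.2]; exact mul_nonneg (by linarith) he2l0
        have m1 := mul_le_mul_of_nonneg_left t1 hn00
        have m2 := mul_le_mul_of_nonneg_left t2 hn01
        linarith
  intro k hk1 hk2
  exact key (N + 1 - k) k hk1 hk2 rfl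
end

section
/- With the same backward recursion for V_k, the value function V_k(P, Pₑ) is decreasing in Pₑ for every k ∈ {1,…,N+1}: if Pₑ ≤ Pₑ′ in the Loewner order then V_k(P, Pₑ) ≥ V_k(P, Pₑ′). -/
open Matrix

lemma my_trace_nonneg {n : ℕ} {M : Matrix (Fin n) (Fin n) ℝ} (hM : M.PosSemidef) :
    0 ≤ M.trace := by
  rw [Matrix.trace]
  apply Finset.sum_nonneg
  intro i _
  exact hM.diag_nonneg

lemma my_psd_trans {n : ℕ} (A : Matrix (Fin n) (Fin n) ℝ) {M : Matrix (Fin n) (Fin n) ℝ}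
    (hM : M.PosSemidef) : (A * M * Aᵀ).PosSemidef := by
  have := hM.mul_mul_conjTranspose_same A
  simpa using this

set_option maxHeartbeats 1000000 in
/-- The backward-recursion value function is decreasing in `Pₑ` (Loewner order). -/
theorem value_function_decreasing_in_Pe {n N : ℕ}
    (A Q Pstar : Matrix (Fin n) (Fin n) ℝ) (hQ : Q.PosSemidef) (hPstar : Pstar.PosSemidef)
    (h : Matrix (Fin n) (Fin n) ℝ → Matrix (Fin n) (Fin n) ℝ)
    (hdef : ∀ X, h X = A * X * Aᵀ + Q)
    (lam lamE e1 e2 : ℝ)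
    (hlam : 0 ≤ lam ∧ lam ≤ 1) (hlamE : 0 ≤ lamE ∧ lamE ≤ 1)
    (he1 : 0 ≤ e1 ∧ e1 ≤ 1) (he2 : 0 ≤ e2 ∧ e2 ≤ 1)
    (β C : ℝ) (hβ : 0 < β ∧ β < 1) (hC : 0 ≤ C)
    (P00 P01 P10 P11 : ℝ → ℝ)
    (h00 : P00 0 = (1 - lam) * (1 - lamE) ∧ P00 1 = (1 - e1 * lam) * (1 - e2 * lamE))
    (h01 : P01 0 = (1 - lam) * lamE ∧ P01 1 = (1 - e1 * lam) * (e2 * lamE))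
    (h10 : P10 0 = lam * (1 - lamE) ∧ P10 1 = e1 * lam * (1 - e2 * lamE))
    (h11 : P11 0 = lam * lamE ∧ P11 1 = e1 * lam * (e2 * lamE))
    (c : Matrix (Fin n) (Fin n) ℝ → Matrix (Fin n) (Fin n) ℝ → ℝ → ℝ)
    (hc : ∀ P Pe (a : ℝ), c P Pe a =
      a * C
      + β * ((a * e1 * lam + (1 - a) * lam) * Pstar.trace
          + (1 - a * e1 * lam - (1 - a) * lam) * (h P).trace)
      - (1 - β) * ((a * e2 * lamE + (1 - a) * lamE) * Pstar.trace
          + (1 - a * e2 * lamE - (1 - a) * lamE) * (h Pe).trace))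
    (V : ℕ → Matrix (Fin n) (Fin n) ℝ → Matrix (Fin n) (Fin n) ℝ → ℝ)
    (hVend : ∀ P Pe, V (N + 1) P Pe = 0)
    (hVrec : ∀ k, 1 ≤ k → k ≤ N → ∀ P Pe, V k P Pe =
      min (c P Pe 0 + P00 0 * V (k + 1) (h P) (h Pe) + P01 0 * V (k + 1) (h P) Pstar
            + P10 0 * V (k + 1) Pstar (h Pe) + P11 0 * V (k + 1) Pstar Pstar)
          (c P Pe 1 + P00 1 * V (k + 1) (h P) (h Pe) + P01 1 * V (k + 1) (h P) Pstar
            + P10 1 * V (k + 1) Pstar (h Pe) + P11 1 * V (k + 1) Pstar Pstar)) :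
    ∀ k, 1 ≤ k → k ≤ N + 1 →
      ∀ P Pe Pe' : Matrix (Fin n) (Fin n) ℝ, P.PosSemidef → Pe.PosSemidef → Pe'.PosSemidef →
        (Pe' - Pe).PosSemidef → V k P Pe' ≤ V k P Pe := by
  obtain ⟨hlam0, hlam1⟩ := hlam
  obtain ⟨hlamE0, hlamE1⟩ := hlamE
  obtain ⟨he10, he11⟩ := he1
  obtain ⟨he20, he21⟩ := he2
  obtain ⟨hβ0, hβ1⟩ := hβ
  -- h preserves PSD
  have hpsd : ∀ X : Matrix (Fin n) (Fin n) ℝ, X.PosSemidef → (h X).PosSemidef := by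
    intro X hX
    rw [hdef]
    exact (my_psd_trans A hX).add hQ
  suffices aux : ∀ d k, k + d = N + 1 → 1 ≤ k →
      ∀ P Pe Pe' : Matrix (Fin n) (Fin n) ℝ, P.PosSemidef → Pe.PosSemidef → Pe'.PosSemidef →
        (Pe' - Pe).PosSemidef → V k P Pe' ≤ V k P Pe by
    intro k hk1 hk2 P Pe Pe' hP hPe hPe' hd
    exact aux (N + 1 - k) k (by omega) hk1 P Pe Pe' hP hPe hPe' hd
  intro d
  induction d with
  | zero =>
    intro k hk _ P Pe Pe' _ _ _ _
    have hkeq : k = N + 1 := by omega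
    subst hkeq
    simp [hVend]
  | succ d ih =>
    intro k hk hk1 P Pe Pe' hP hPe hPe' hdiff
    have hkN : k ≤ N := by omega
    have hk1d : (k + 1) + d = N + 1 := by omega
    -- diff of images is PSD
    have hdiffh : (h Pe' - h Pe).PosSemidef := by
      have : h Pe' - h Pe = A * (Pe' - Pe) * Aᵀ := by
        rw [hdef, hdef]; noncomm_ring
      rw [this]
      exact my_psd_trans A hdiff
    have htr : (h Pe).trace ≤ (h Pe').trace := by
      have := my_trace_nonneg hdiffh
      rw [Matrix.trace_sub] at this
      linarith
    -- c is decreasing in Pe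
    have hc0 : c P Pe' 0 ≤ c P Pe 0 := by
      rw [hc, hc]
      have h1 : (0:ℝ) ≤ 1 - β := by linarith
      have h2 : (0:ℝ) ≤ 1 - lamE := by linarith
      nlinarith [mul_nonneg (mul_nonneg h1 h2) (sub_nonneg.mpr htr)]
    have hc1 : c P Pe' 1 ≤ c P Pe 1 := by
      rw [hc, hc]
      have h1 : (0:ℝ) ≤ 1 - β := by linarith
      have h2 : (0:ℝ) ≤ 1 - e2 * lamE := by nlinarith
      nlinarith [mul_nonneg (mul_nonneg h1 h2) (sub_nonneg.mpr htr)]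
    -- IH applications
    have hV1 : V (k+1) (h P) (h Pe') ≤ V (k+1) (h P) (h Pe) :=
      ih (k+1) hk1d (by omega) (h P) (h Pe) (h Pe') (hpsd P hP) (hpsd Pe hPe)
        (hpsd Pe' hPe') hdiffh
    have hV2 : V (k+1) Pstar (h Pe') ≤ V (k+1) Pstar (h Pe) :=
      ih (k+1) hk1d (by omega) Pstar (h Pe) (h Pe') hPstar (hpsd Pe hPe)
        (hpsd Pe' hPe') hdiffh
    -- coefficient nonnegativity
    have hP00_0 : 0 ≤ P00 0 := by
      rw [h00.1]; exact mul_nonneg (by linarith) (by linarith)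
    have he1l : e1 * lam ≤ 1 := by nlinarith
    have he2l : e2 * lamE ≤ 1 := by nlinarith
    have hP00_1 : 0 ≤ P00 1 := by
      rw [h00.2]; exact mul_nonneg (by linarith) (by linarith)
    have hP10_0 : 0 ≤ P10 0 := by
      rw [h10.1]; exact mul_nonneg hlam0 (by linarith)
    have hP10_1 : 0 ≤ P10 1 := by
      rw [h10.2]; exact mul_nonneg (mul_nonneg he10 hlam0) (by linarith)
    rw [hVrec k hk1 hkN P Pe, hVrec k hk1 hkN P Pe']
    exact min_le_min
      (add_le_add (add_le_add (add_le_add (add_le_add hc0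
        (mul_le_mul_of_nonneg_left hV1 hP00_0)) le_rfl)
        (mul_le_mul_of_nonneg_left hV2 hP10_0)) le_rfl)
      (add_le_add (add_le_add (add_le_add (add_le_add hc1
        (mul_le_mul_of_nonneg_left hV1 hP00_1)) le_rfl)
        (mul_le_mul_of_nonneg_left hV2 hP10_1)) le_rfl)
end
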